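/- Let h : ℝ → ℝ be a continuous 2π-periodic function that is Lipschitz with constant L. Then for every natural number k ≥ 1 there exists a trigonometric polynomial T of degree at most k such that ‖h − T‖_{C[−π,π]} ≤ (π/k)·L. -/

import Mathlib

open Real

namespace JacksonAux

lemma integral_cos_int (d : ℤ) :
    (∫ t in (-π)..π, Real.cos (d * t)) = if d = 0 then 2*π else 0 := by
  split_ifs with hd
  · subst hd
    simp [two_mul]
  · have hdr : (d:ℝ) ≠ 0 := Int.cast_ne_zero.mpr hd
    rw [intervalIntegral.integral_comp_mul_left Real.cos hdr, integral_cos]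
    have h1 : Real.sin ((d:ℝ)*π) = 0 := Real.sin_int_mul_pi d
    have h2 : Real.sin ((d:ℝ)*(-π)) = 0 := by rw [mul_neg, Real.sin_neg, h1, neg_zero]
    rw [h1, h2]
    simp

lemma integral_cos_int_mul_cos (d : ℤ) :
    (∫ t in (-π)..π, Real.cos (d * t) * Real.cos t) = if d = 1 ∨ d = -1 then π else 0 := by
  have key : ∀ t : ℝ, Real.cos (d*t) * Real.cos t
      = (Real.cos (((d-1 : ℤ) : ℝ) * t) + Real.cos (((d+1:ℤ) : ℝ) * t)) / 2 := by
    intro t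
    push_cast
    rw [sub_mul, add_mul, Real.cos_sub, Real.cos_add]
    ring_nf
  rw [intervalIntegral.integral_congr (fun t _ => key t)]
  have i1 : IntervalIntegrable (fun t => Real.cos (((d-1:ℤ):ℝ) * t)) MeasureTheory.volume (-π) π :=
    (Real.continuous_cos.comp (continuous_const.mul continuous_id)).intervalIntegrable _ _
  have i2 : IntervalIntegrable (fun t => Real.cos (((d+1:ℤ):ℝ) * t)) MeasureTheory.volume (-π) π :=
    (Real.continuous_cos.comp (continuous_const.mul continuous_id)).intervalIntegrable _ _
  rw [intervalIntegral.integral_div, intervalIntegral.integral_add i1 i2,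
    integral_cos_int (d-1), integral_cos_int (d+1)]
  rcases eq_or_ne d 1 with rfl | h1
  · norm_num
  rcases eq_or_ne d (-1) with rfl | h2
  · norm_num
  have : ¬ (d = 1 ∨ d = -1) := by tauto
  rw [if_neg (by omega : ¬ d - 1 = 0), if_neg (by omega : ¬ d + 1 = 0), if_neg this]
  norm_num

lemma per_shift (g : ℝ → ℝ) (hg : Function.Periodic g (2*π)) (x : ℝ) :
    (∫ t in (-π)..π, g (x - t)) = ∫ u in (-π)..π, g u := by
  rw [intervalIntegral.integral_comp_sub_left g x]
  have h1 := hg.intervalIntegral_add_eq (x - π) (-π)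
  have e1 : x - π + 2*π = x + π := by ring
  have e2 : -π + 2*π = π := by ring
  rw [e1, e2] at h1
  rw [show x - -π = x + π by ring]
  exact h1

lemma cos_int_periodic (d : ℤ) : Function.Periodic (fun u => Real.cos ((d:ℝ) * u)) (2*π) := by
  intro u
  simp only [mul_add]
  exact Real.cos_add_int_mul_two_pi _ d

lemma sin_int_periodic (d : ℤ) : Function.Periodic (fun u => Real.sin ((d:ℝ) * u)) (2*π) := by
  intro u
  simp only [mul_add]
  exact Real.sin_add_int_mul_two_pi _ d

lemma shift_lemma {h : ℝ → ℝ} (hcont : Continuous h) (hper : Function.Periodic h (2*π))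
    (d : ℤ) (x : ℝ) :
    (∫ t in (-π)..π, h (x - t) * Real.cos ((d:ℝ)*t))
      = Real.cos ((d:ℝ)*x) * (∫ u in (-π)..π, h u * Real.cos ((d:ℝ)*u))
        + Real.sin ((d:ℝ)*x) * (∫ u in (-π)..π, h u * Real.sin ((d:ℝ)*u)) := by
  have key : ∀ t : ℝ, h (x - t) * Real.cos ((d:ℝ)*t)
      = Real.cos ((d:ℝ)*x) * (h (x-t) * Real.cos ((d:ℝ)*(x-t)))
        + Real.sin ((d:ℝ)*x) * (h (x-t) * Real.sin ((d:ℝ)*(x-t))) := by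
    intro t
    have e : (d:ℝ)*t = (d:ℝ)*x - (d:ℝ)*(x-t) := by ring
    rw [e, Real.cos_sub]
    ring
  rw [intervalIntegral.integral_congr (fun t _ => key t)]
  have c1 : Continuous (fun u => h u * Real.cos ((d:ℝ)*u)) :=
    hcont.mul (Real.continuous_cos.comp (continuous_const.mul continuous_id))
  have c2 : Continuous (fun u => h u * Real.sin ((d:ℝ)*u)) :=
    hcont.mul (Real.continuous_sin.comp (continuous_const.mul continuous_id))
  have i1 : IntervalIntegrable (fun t => Real.cos ((d:ℝ)*x) * (h (x-t) * Real.cos ((d:ℝ)*(x-t))))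
      MeasureTheory.volume (-π) π := by
    apply Continuous.intervalIntegrable
    exact continuous_const.mul (c1.comp (continuous_const.sub continuous_id))
  have i2 : IntervalIntegrable (fun t => Real.sin ((d:ℝ)*x) * (h (x-t) * Real.sin ((d:ℝ)*(x-t))))
      MeasureTheory.volume (-π) π := by
    apply Continuous.intervalIntegrable
    exact continuous_const.mul (c2.comp (continuous_const.sub continuous_id))
  rw [intervalIntegral.integral_add i1 i2, intervalIntegral.integral_const_mul,
    intervalIntegral.integral_const_mul]
  have p1 : Function.Periodic (fun u => h u * Real.cos ((d:ℝ)*u)) (2*π) :=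
    hper.mul (cos_int_periodic d)
  have p2 : Function.Periodic (fun u => h u * Real.sin ((d:ℝ)*u)) (2*π) :=
    hper.mul (sin_int_periodic d)
  rw [per_shift _ p1 x, per_shift _ p2 x]

lemma sin_le_sin {a b : ℝ} (ha : 0 ≤ a) (hab : a ≤ b) (hb : b ≤ π/2) :
    Real.sin a ≤ Real.sin b := by
  have h := Real.sin_sub_sin b a
  have h1 : 0 ≤ Real.sin ((b - a)/2) :=
    Real.sin_nonneg_of_nonneg_of_le_pi (by linarith) (by nlinarith [Real.pi_pos])
  have h2 : 0 ≤ Real.cos ((b + a)/2) :=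
    Real.cos_nonneg_of_mem_Icc ⟨by nlinarith [Real.pi_pos], by linarith⟩
  nlinarith

lemma majorization_aux {ε t : ℝ} (hε0 : 0 < ε) (hε4 : ε ≤ π/4)
    (hG : (π - ε) * Real.sin ε ≤ 1 + Real.cos ε)
    (ht0 : 0 ≤ t) (htπ : t ≤ π) :
    t * Real.sin ε ≤ ε * Real.sin ε + Real.cos ε - Real.cos t := by
  have hπ := Real.pi_pos
  have hsε : 0 ≤ Real.sin ε := Real.sin_nonneg_of_nonneg_of_le_pi (le_of_lt hε0) (by linarith)
  rcases le_total t ε with hc | hc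
  · -- t ≤ ε : show cos t - cos ε ≤ (ε - t) * sin ε
    have hint : Real.cos t - Real.cos ε = ∫ s in t..ε, Real.sin s := by
      rw [integral_sin]
    have hconst : (ε - t) * Real.sin ε = ∫ _ in t..ε, Real.sin ε := by
      rw [intervalIntegral.integral_const, smul_eq_mul]
    have hmono : (∫ s in t..ε, Real.sin s) ≤ ∫ _ in t..ε, Real.sin ε := by
      apply intervalIntegral.integral_mono_on hc
        (Real.continuous_sin.intervalIntegrable _ _)
        (intervalIntegrable_const)
      intro s hs
      exact sin_le_sin (ht0.trans hs.1) hs.2 (by linarith)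
    linarith [hint ▸ hconst ▸ hmono]
  · rcases le_total t (π - ε) with hc2 | hc2
    · -- ε ≤ t ≤ π - ε
      have hint : Real.cos ε - Real.cos t = ∫ s in ε..t, Real.sin s := by rw [integral_sin]
      have hconst : (t - ε) * Real.sin ε = ∫ _ in ε..t, Real.sin ε := by
        rw [intervalIntegral.integral_const, smul_eq_mul]
      have hmono : (∫ _ in ε..t, Real.sin ε) ≤ ∫ s in ε..t, Real.sin s := by
        apply intervalIntegral.integral_mono_on hc intervalIntegrable_const
          (Real.continuous_sin.intervalIntegrable _ _)
        intro s hs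
        -- sin ε ≤ sin s for s ∈ [ε, π-ε]
        have h := Real.sin_sub_sin s ε
        have h1 : 0 ≤ Real.sin ((s - ε)/2) :=
          Real.sin_nonneg_of_nonneg_of_le_pi (by linarith [hs.1]) (by linarith [hs.2])
        have h2 : 0 ≤ Real.cos ((s + ε)/2) :=
          Real.cos_nonneg_of_mem_Icc ⟨by linarith [hs.1], by linarith [hs.2]⟩
        nlinarith
      linarith [hint ▸ hconst ▸ hmono]
    · -- π - ε ≤ t ≤ π
      set r := (π - t)/2 with hr
      have hr0 : 0 ≤ r := by simp [hr]; linarith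
      have hrε : r ≤ ε/2 := by simp [hr]; linarith
      have hcos : 1 + Real.cos t = 2 * Real.sin r ^ 2 := by
        have e : Real.sin r = Real.cos (t/2) := by
          rw [hr, show (π - t)/2 = π/2 - t/2 by ring, Real.sin_pi_div_two_sub]
        have e2 : Real.cos t = 2 * Real.cos (t/2) ^ 2 - 1 := by
          have := Real.cos_two_mul (t/2)
          rwa [show 2*(t/2) = t by ring] at this
        rw [e, e2]
        ring
      have hs1 : 0 ≤ Real.sin r := Real.sin_nonneg_of_nonneg_of_le_pi hr0 (by linarith)
      have hs2 : Real.sin r ≤ r := Real.sin_le hr0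
      have hs3 : Real.sin r ≤ Real.sin ε := sin_le_sin hr0 (by linarith) (by linarith)
      -- 1 + cos t ≤ (π - t) * sin ε
      have key : 1 + Real.cos t ≤ (π - t) * Real.sin ε := by
        rw [hcos]
        nlinarith
      nlinarith

lemma sum_identity (k : ℕ) (hk : 1 ≤ k) :
    (∑ j ∈ Finset.range k, Real.sin (((j:ℝ)+1)*(π/(k+2))) * Real.sin (((j:ℝ)+2)*(π/(k+2))))
      = Real.cos (π/(k+2)) * ∑ j ∈ Finset.range (k+1), Real.sin (((j:ℝ)+1)*(π/(k+2)))^2 := by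
  set ε := π/(k+2) with hε
  set v : ℕ → ℝ := fun j => Real.sin (j * ε) with hv
  have hk2 : ((k:ℝ)+2) ≠ 0 := by positivity
  have hrec : ∀ j : ℕ, Real.sin (((j:ℝ)+2)*ε) = 2 * Real.cos ε * Real.sin (((j:ℝ)+1)*ε) - v j := by
    intro j
    simp only [hv]
    rw [show ((j:ℝ)+2)*ε = ((j:ℝ)+1)*ε + ε by ring, show (j:ℝ)*ε = ((j:ℝ)+1)*ε - ε by ring,
      Real.sin_add, Real.sin_sub]
    ring
  set S1 := ∑ j ∈ Finset.range k, Real.sin (((j:ℝ)+1)*ε) * Real.sin (((j:ℝ)+2)*ε) with hS1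
  set Q := ∑ j ∈ Finset.range k, Real.sin (((j:ℝ)+1)*ε)^2 with hQ
  have h1 : S1 = 2 * Real.cos ε * Q - ∑ j ∈ Finset.range k, v j * v (j+1) := by
    rw [hS1, hQ, Finset.mul_sum, ← Finset.sum_sub_distrib]
    apply Finset.sum_congr rfl
    intro j _
    rw [hrec j]
    have : v (j+1) = Real.sin (((j:ℝ)+1)*ε) := by simp only [hv]; push_cast; ring_nf
    rw [this]
    ring
  have h2 : ∑ j ∈ Finset.range (k+1), v j * v (j+1) = S1 + v 0 * v 1 := by
    rw [Finset.sum_range_succ' (fun j => v j * v (j+1)) k, hS1]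
    congr 1
    apply Finset.sum_congr rfl
    intro j _
    have e1 : v (j+1) = Real.sin (((j:ℝ)+1)*ε) := by simp only [hv]; push_cast; ring_nf
    have e2 : v (j+2) = Real.sin (((j:ℝ)+2)*ε) := by simp only [hv]; push_cast; ring_nf
    rw [e1, e2]
  have hv0 : v 0 = 0 := by simp [hv]
  have h3 : ∑ j ∈ Finset.range (k+1), v j * v (j+1)
      = (∑ j ∈ Finset.range k, v j * v (j+1)) + v k * v (k+1) := Finset.sum_range_succ _ k
  have hkε : (k:ℝ) * ε = π - 2*ε := by
    rw [hε]; field_simp; ring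
  have hk1ε : ((k:ℝ)+1) * ε = π - ε := by
    rw [hε]; field_simp; ring
  have hvk : v k = 2 * Real.sin ε * Real.cos ε := by
    simp only [hv]
    rw [hkε, Real.sin_pi_sub, show 2*ε = 2*ε from rfl, Real.sin_two_mul]
  have hvk1 : v (k+1) = Real.sin ε := by
    simp only [hv]
    push_cast
    rw [hk1ε, Real.sin_pi_sub]
  have hb : v k * v (k+1) = 2 * Real.cos ε * v (k+1)^2 := by
    rw [hvk, hvk1]; ring
  have hlast : Real.sin (((k:ℝ)+1)*ε)^2 = v (k+1)^2 := by
    simp only [hv]; push_cast; ring_nf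
  have hfin : ∑ j ∈ Finset.range (k+1), Real.sin (((j:ℝ)+1)*ε)^2 = Q + v (k+1)^2 := by
    rw [Finset.sum_range_succ, hQ, hlast]
  rw [hfin]
  have : ∑ j ∈ Finset.range k, v j * v (j+1) = S1 - v k * v (k+1) := by
    have h4 := h3
    rw [h2, hv0] at h4
    linarith
  rw [this] at h1
  rw [hb] at h1
  linarith

lemma Krep (k : ℕ) (c : ℕ → ℝ) (t : ℝ) :
    (∑ j ∈ Finset.range (k+1), c j * Real.cos (j*t))^2
      + (∑ j ∈ Finset.range (k+1), c j * Real.sin (j*t))^2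
    = ∑ j ∈ Finset.range (k+1), ∑ l ∈ Finset.range (k+1),
        c j * c l * Real.cos (((j:ℝ)-(l:ℝ))*t) := by
  rw [pow_two, pow_two, Finset.sum_mul_sum, Finset.sum_mul_sum, ← Finset.sum_add_distrib]
  apply Finset.sum_congr rfl
  intro j _
  rw [← Finset.sum_add_distrib]
  apply Finset.sum_congr rfl
  intro l _
  rw [show ((j:ℝ)-(l:ℝ))*t = (j:ℝ)*t - (l:ℝ)*t by ring, Real.cos_sub]
  ring

lemma Kint (k : ℕ) (c : ℕ → ℝ) :
    (∫ t in (-π)..π, ((∑ j ∈ Finset.range (k+1), c j * Real.cos (j*t))^2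
      + (∑ j ∈ Finset.range (k+1), c j * Real.sin (j*t))^2))
    = 2*π*∑ j ∈ Finset.range (k+1), (c j)^2 := by
  rw [intervalIntegral.integral_congr (fun t _ => Krep k c t)]
  rw [intervalIntegral.integral_finset_sum (fun j _ => by
    apply Continuous.intervalIntegrable
    apply continuous_finset_sum
    intro l _
    fun_prop)]
  have hinner : ∀ j ∈ Finset.range (k+1),
      (∫ t in (-π)..π, ∑ l ∈ Finset.range (k+1), c j * c l * Real.cos (((j:ℝ)-(l:ℝ))*t))
      = (c j)^2 * (2*π) := by
    intro j hj
    rw [intervalIntegral.integral_finset_sum (fun l _ => by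
      apply Continuous.intervalIntegrable; fun_prop)]
    have : ∀ l ∈ Finset.range (k+1),
        (∫ t in (-π)..π, c j * c l * Real.cos (((j:ℝ)-(l:ℝ))*t))
        = if l = j then (c j)^2 * (2*π) else 0 := by
      intro l _
      rw [intervalIntegral.integral_const_mul]
      have hcast : ((j:ℝ)-(l:ℝ)) = (((j:ℤ)-(l:ℤ) : ℤ) : ℝ) := by push_cast; ring
      simp only [hcast]
      rw [integral_cos_int ((j:ℤ)-(l:ℤ))]
      by_cases hjl : l = j
      · subst hjl
        rw [if_pos (by omega : ((l:ℤ)-(l:ℤ) = 0)), if_pos rfl]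
        ring
      · rw [if_neg (by omega : ¬((j:ℤ)-(l:ℤ) = 0)), if_neg hjl]
        ring
    rw [Finset.sum_congr rfl this, Finset.sum_ite_eq' (Finset.range (k+1)) j
      (fun l => (c j)^2*(2*π)), if_pos hj]
  rw [Finset.sum_congr rfl hinner, ← Finset.sum_mul]
  ring

lemma Kcos (k : ℕ) (c : ℕ → ℝ) :
    (∫ t in (-π)..π, ((∑ j ∈ Finset.range (k+1), c j * Real.cos (j*t))^2
      + (∑ j ∈ Finset.range (k+1), c j * Real.sin (j*t))^2) * Real.cos t)
    = 2*π*∑ j ∈ Finset.range k, c j * c (j+1) := by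
  have hcongr : ∀ t ∈ Set.uIcc (-π) π,
      ((∑ j ∈ Finset.range (k+1), c j * Real.cos (j*t))^2
      + (∑ j ∈ Finset.range (k+1), c j * Real.sin (j*t))^2) * Real.cos t
      = ∑ j ∈ Finset.range (k+1), ∑ l ∈ Finset.range (k+1),
          c j * c l * (Real.cos (((j:ℝ)-(l:ℝ))*t) * Real.cos t) := by
    intro t _
    rw [Krep k c t, Finset.sum_mul]
    apply Finset.sum_congr rfl
    intro j _
    rw [Finset.sum_mul]
    apply Finset.sum_congr rfl
    intro l _
    ring
  rw [intervalIntegral.integral_congr hcongr]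
  rw [intervalIntegral.integral_finset_sum (fun j _ => by
    apply Continuous.intervalIntegrable
    apply continuous_finset_sum
    intro l _
    fun_prop)]
  have hinner : ∀ j ∈ Finset.range (k+1),
      (∫ t in (-π)..π, ∑ l ∈ Finset.range (k+1),
          c j * c l * (Real.cos (((j:ℝ)-(l:ℝ))*t) * Real.cos t))
      = ∑ l ∈ Finset.range (k+1),
          ((if (j:ℤ)-(l:ℤ) = 1 then c j * c l * π else 0)
            + (if l = j+1 then c j * c l * π else 0)) := by
    intro j _
    rw [intervalIntegral.integral_finset_sum (fun l _ => by
      apply Continuous.intervalIntegrable; fun_prop)]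
    apply Finset.sum_congr rfl
    intro l _
    rw [intervalIntegral.integral_const_mul]
    have hcast : ((j:ℝ)-(l:ℝ)) = (((j:ℤ)-(l:ℤ) : ℤ) : ℝ) := by push_cast; ring
    simp only [hcast]
    rw [integral_cos_int_mul_cos ((j:ℤ)-(l:ℤ))]
    by_cases h1 : (j:ℤ)-(l:ℤ) = 1
    · rw [if_pos (Or.inl h1), if_pos h1, if_neg (by omega)]
      ring
    · by_cases h2 : (j:ℤ)-(l:ℤ) = -1
      · rw [if_pos (Or.inr h2), if_neg h1, if_pos (by omega)]
        ring
      · rw [if_neg (by tauto), if_neg h1, if_neg (by omega)]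
        ring
  rw [Finset.sum_congr rfl hinner]
  have hstep : ∀ f : ℕ → ℕ → ℝ,
      (∑ a ∈ Finset.range (k+1), ∑ b ∈ Finset.range (k+1), if b = a+1 then f a b else 0)
      = ∑ a ∈ Finset.range k, f a (a+1) := by
    intro f
    have h1 : ∀ a ∈ Finset.range (k+1),
        (∑ b ∈ Finset.range (k+1), if b = a+1 then f a b else 0)
        = if a+1 ∈ Finset.range (k+1) then f a (a+1) else 0 :=
      fun a _ => Finset.sum_ite_eq' (Finset.range (k+1)) (a+1) (fun b => f a b)
    rw [Finset.sum_congr rfl h1, Finset.sum_range_succ, if_neg (by simp), add_zero]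
    apply Finset.sum_congr rfl
    intro a ha
    rw [if_pos (by simp at ha ⊢; omega)]
  have hsplit : (∑ j ∈ Finset.range (k+1), ∑ l ∈ Finset.range (k+1),
        ((if (j:ℤ)-(l:ℤ) = 1 then c j * c l * π else 0)
          + (if l = j+1 then c j * c l * π else 0)))
      = (∑ j ∈ Finset.range (k+1), ∑ l ∈ Finset.range (k+1),
          (if (j:ℤ)-(l:ℤ) = 1 then c j * c l * π else 0))
        + (∑ j ∈ Finset.range (k+1), ∑ l ∈ Finset.range (k+1),
          (if l = j+1 then c j * c l * π else 0)) := by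
    rw [← Finset.sum_add_distrib]
    apply Finset.sum_congr rfl
    intro j _
    rw [← Finset.sum_add_distrib]
  rw [hsplit]
  have hP : (∑ j ∈ Finset.range (k+1), ∑ l ∈ Finset.range (k+1),
        (if (j:ℤ)-(l:ℤ) = 1 then c j * c l * π else 0))
      = ∑ a ∈ Finset.range k, c (a+1) * c a * π := by
    rw [Finset.sum_comm]
    have : ∀ l ∈ Finset.range (k+1), ∀ j ∈ Finset.range (k+1),
        (if (j:ℤ)-(l:ℤ) = 1 then c j * c l * π else 0)
        = (if j = l+1 then c j * c l * π else 0) := by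
      intro l _ j _
      exact if_congr (by omega) rfl rfl
    rw [Finset.sum_congr rfl (fun l hl => Finset.sum_congr rfl (this l hl))]
    exact hstep (fun a b => c b * c a * π)
  have hQ : (∑ j ∈ Finset.range (k+1), ∑ l ∈ Finset.range (k+1),
        (if l = j+1 then c j * c l * π else 0))
      = ∑ a ∈ Finset.range k, c a * c (a+1) * π := hstep (fun a b => c a * c b * π)
  rw [hP, hQ, Finset.mul_sum]
  rw [← Finset.sum_add_distrib]
  apply Finset.sum_congr rfl
  intro a _
  ring

lemma pair_integral {h : ℝ → ℝ} (hcont : Continuous h) (hper : Function.Periodic h (2*π))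
    (j l : ℕ) (x : ℝ) :
    (∫ t in (-π)..π, h (x - t) * Real.cos (((j:ℝ)-(l:ℝ))*t))
      = Real.cos (((((j:ℤ)-(l:ℤ)).natAbs : ℕ):ℝ) * x)
          * (∫ u in (-π)..π, h u * Real.cos (((((j:ℤ)-(l:ℤ)).natAbs : ℕ):ℝ)*u))
        + Real.sin (((((j:ℤ)-(l:ℤ)).natAbs : ℕ):ℝ) * x)
          * (∫ u in (-π)..π, h u * Real.sin (((((j:ℤ)-(l:ℤ)).natAbs : ℕ):ℝ)*u)) := by
  set d : ℤ := (j:ℤ)-(l:ℤ) with hd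
  set s : ℕ := d.natAbs with hs
  have hc : ((j:ℝ)-(l:ℝ)) = (d:ℝ) := by rw [hd]; push_cast; ring
  simp only [hc]
  rw [shift_lemma hcont hper d x]
  rcases Int.natAbs_eq d with he | he
  · have hds : (d:ℝ) = (s:ℝ) := by rw [he, ← hs]; push_cast; rfl
    rw [hds]
  · have hds : (d:ℝ) = -(s:ℝ) := by rw [he, ← hs]; push_cast; ring
    rw [hds]
    simp only [neg_mul, Real.cos_neg, Real.sin_neg, mul_neg, neg_neg]
    rw [intervalIntegral.integral_neg]
    ring

lemma Tform {h : ℝ → ℝ} (hcont : Continuous h) (hper : Function.Periodic h (2*π))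
    (k : ℕ) (c : ℕ → ℝ) (x : ℝ) :
    (∫ t in (-π)..π, h (x-t) * ((∑ j ∈ Finset.range (k+1), c j * Real.cos (j*t))^2
      + (∑ j ∈ Finset.range (k+1), c j * Real.sin (j*t))^2))
    = ∑ s ∈ Finset.range (k+1),
        ((∑ p ∈ (Finset.range (k+1) ×ˢ Finset.range (k+1)).filter
            (fun p => ((p.1:ℤ)-(p.2:ℤ)).natAbs = s), c p.1 * c p.2)
          * ((∫ u in (-π)..π, h u * Real.cos ((s:ℝ)*u)) * Real.cos ((s:ℝ)*x)
            + (∫ u in (-π)..π, h u * Real.sin ((s:ℝ)*u)) * Real.sin ((s:ℝ)*x))) := by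
  have hKrep : ∀ t ∈ Set.uIcc (-π) π, h (x-t) * ((∑ j ∈ Finset.range (k+1), c j * Real.cos (j*t))^2
      + (∑ j ∈ Finset.range (k+1), c j * Real.sin (j*t))^2)
      = ∑ j ∈ Finset.range (k+1), ∑ l ∈ Finset.range (k+1),
          c j * c l * (h (x-t) * Real.cos (((j:ℝ)-(l:ℝ))*t)) := by
    intro t _
    rw [Krep k c t, Finset.mul_sum]
    apply Finset.sum_congr rfl
    intro j _
    rw [Finset.mul_sum]
    apply Finset.sum_congr rfl
    intro l _
    ring
  rw [intervalIntegral.integral_congr hKrep]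
  have hcsub : Continuous (fun t : ℝ => h (x - t)) :=
    hcont.comp (continuous_const.sub continuous_id)
  rw [intervalIntegral.integral_finset_sum (fun j _ => by
    apply Continuous.intervalIntegrable
    apply continuous_finset_sum
    intro l _
    exact continuous_const.mul (hcsub.mul (by fun_prop)))]
  have hinner : ∀ j ∈ Finset.range (k+1),
      (∫ t in (-π)..π, ∑ l ∈ Finset.range (k+1),
        c j * c l * (h (x-t) * Real.cos (((j:ℝ)-(l:ℝ))*t)))
      = ∑ l ∈ Finset.range (k+1), c j * c l *
          (Real.cos (((((j:ℤ)-(l:ℤ)).natAbs : ℕ):ℝ) * x)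
            * (∫ u in (-π)..π, h u * Real.cos (((((j:ℤ)-(l:ℤ)).natAbs : ℕ):ℝ)*u))
          + Real.sin (((((j:ℤ)-(l:ℤ)).natAbs : ℕ):ℝ) * x)
            * (∫ u in (-π)..π, h u * Real.sin (((((j:ℤ)-(l:ℤ)).natAbs : ℕ):ℝ)*u))) := by
    intro j _
    rw [intervalIntegral.integral_finset_sum (fun l _ => by
      apply Continuous.intervalIntegrable
      exact continuous_const.mul (hcsub.mul (by fun_prop)))]
    apply Finset.sum_congr rfl
    intro l _
    rw [intervalIntegral.integral_const_mul, pair_integral hcont hper j l x]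
  rw [Finset.sum_congr rfl hinner]
  rw [← Finset.sum_product']
  rw [← Finset.sum_fiberwise_of_maps_to (t := Finset.range (k+1))
    (g := fun p : ℕ × ℕ => ((p.1:ℤ)-(p.2:ℤ)).natAbs) (fun p hp => by
      simp only [Finset.mem_product, Finset.mem_range] at hp
      simp only [Finset.mem_range]
      omega)]
  apply Finset.sum_congr rfl
  intro s _
  have : ∀ p ∈ (Finset.range (k+1) ×ˢ Finset.range (k+1)).filter
      (fun p : ℕ × ℕ => ((p.1:ℤ)-(p.2:ℤ)).natAbs = s),
      c p.1 * c p.2 *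
        (Real.cos (((((p.1:ℤ)-(p.2:ℤ)).natAbs : ℕ):ℝ) * x)
          * (∫ u in (-π)..π, h u * Real.cos (((((p.1:ℤ)-(p.2:ℤ)).natAbs : ℕ):ℝ)*u))
        + Real.sin (((((p.1:ℤ)-(p.2:ℤ)).natAbs : ℕ):ℝ) * x)
          * (∫ u in (-π)..π, h u * Real.sin (((((p.1:ℤ)-(p.2:ℤ)).natAbs : ℕ):ℝ)*u)))
      = c p.1 * c p.2 * ((∫ u in (-π)..π, h u * Real.cos ((s:ℝ)*u)) * Real.cos ((s:ℝ)*x)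
            + (∫ u in (-π)..π, h u * Real.sin ((s:ℝ)*u)) * Real.sin ((s:ℝ)*x)) := by
    intro p hp
    rw [Finset.mem_filter] at hp
    rw [hp.2]
    ring
  rw [Finset.sum_congr rfl this, ← Finset.sum_mul]

end JacksonAux

theorem jackson_lipschitz (h : ℝ → ℝ) (L : NNReal)
    (hcont : Continuous h) (hper : Function.Periodic h (2 * π))
    (hlip : LipschitzWith L h) (k : ℕ) (hk : 1 ≤ k) :
    ∃ A B : ℕ → ℝ, ∀ x ∈ Set.Icc (-π) π,
      |h x - (A 0 + ∑ s ∈ Finset.Icc 1 k, (A s * Real.cos (s * x) + B s * Real.sin (s * x)))|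
        ≤ (π / k) * L := by
  have hπ := Real.pi_pos
  have hL0 : (0:ℝ) ≤ L := L.coe_nonneg
  rcases Nat.lt_or_ge k 2 with hk1 | hk2
  · -- k = 1
    obtain rfl : k = 1 := by omega
    refine ⟨fun s => if s = 0 then h 0 else 0, fun _ => 0, ?_⟩
    intro x hx
    have hd := hlip.dist_le_mul x 0
    rw [Real.dist_eq, Real.dist_eq, sub_zero] at hd
    have hxπ : |x| ≤ π := abs_le.mpr ⟨hx.1, hx.2⟩
    have habs : |h x - h 0| ≤ π * L := by
      calc |h x - h 0| ≤ (L:ℝ) * |x| := hd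
        _ ≤ (L:ℝ) * π := mul_le_mul_of_nonneg_left hxπ hL0
        _ = π * L := by ring
    simpa using habs.trans_eq (by norm_num)
  · -- main case : k ≥ 2
    have hk0R : (0:ℝ) < (k:ℝ) := by positivity
    have hkR : (2:ℝ) ≤ (k:ℝ) := by exact_mod_cast hk2
    set ε : ℝ := π / ((k:ℝ)+2) with hεdef
    have hε0 : 0 < ε := by rw [hεdef]; positivity
    have hε4 : ε ≤ π/4 := by
      rw [hεdef]
      apply div_le_div_of_nonneg_left hπ.le (by norm_num) <;> linarith
    have hsε : 0 < Real.sin ε := Real.sin_pos_of_pos_of_lt_pi hε0 (by linarith)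
    have hG : (π - ε) * Real.sin ε ≤ 1 + Real.cos ε := by
      rcases Nat.lt_or_ge k 3 with hk3 | hk3
      · -- k = 2
        obtain rfl : k = 2 := by omega
        have hε : ε = π/4 := by rw [hεdef]; norm_num
        rw [hε, Real.sin_pi_div_four, Real.cos_pi_div_four]
        have hs2 : Real.sqrt 2 ^ 2 = 2 := Real.sq_sqrt (by norm_num)
        have hs2n : (0:ℝ) ≤ Real.sqrt 2 := Real.sqrt_nonneg 2
        have hs2b : Real.sqrt 2 ≤ 1.415 := by nlinarith
        nlinarith [Real.pi_lt_d2]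
      · -- k ≥ 3
        have hk3R : (3:ℝ) ≤ (k:ℝ) := by exact_mod_cast hk3
        have hε5 : ε ≤ π/5 := by
          rw [hεdef]
          apply div_le_div_of_nonneg_left hπ.le (by norm_num) <;> linarith
        have h1 : Real.sin ε ≤ ε := Real.sin_le hε0.le
        have h2 : 1 - ε^2/2 ≤ Real.cos ε := Real.one_sub_sq_div_two_le_cos
        have h3 : π * ε ≤ 2 := by nlinarith [Real.pi_lt_d2]
        nlinarith
    set c : ℕ → ℝ := fun j => Real.sin (((j:ℝ)+1)*ε) with hcdef
    set N : ℝ := ∑ j ∈ Finset.range (k+1), (c j)^2 with hNdef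
    have hN0 : 0 < N := by
      have h00 : (c 0)^2 ≤ N := by
        rw [hNdef]
        exact Finset.single_le_sum (fun j _ => sq_nonneg (c j)) (Finset.mem_range.mpr (by omega))
      have hc0 : c 0 = Real.sin ε := by rw [hcdef]; norm_num
      nlinarith
    have hS0 : (0:ℝ) < 2*π*N := mul_pos (mul_pos two_pos Real.pi_pos) hN0
    set Kf : ℝ → ℝ := fun t => (∑ j ∈ Finset.range (k+1), c j * Real.cos (j*t))^2
      + (∑ j ∈ Finset.range (k+1), c j * Real.sin (j*t))^2 with hKf
    have hKcont : Continuous Kf := by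
      simp only [hKf]
      apply Continuous.add
      · exact (continuous_finset_sum _ (fun j _ => by fun_prop)).pow 2
      · exact (continuous_finset_sum _ (fun j _ => by fun_prop)).pow 2
    have hK0 : ∀ t, 0 ≤ Kf t := fun t => by simp only [hKf]; exact add_nonneg (sq_nonneg _) (sq_nonneg _)
    have hKint : (∫ t in (-π)..π, Kf t) = 2*π*N := by
      rw [hNdef]
      simp only [hKf]
      exact JacksonAux.Kint k c
    have hsum : ∑ j ∈ Finset.range k, c j * c (j+1) = Real.cos ε * N := by
      have hid := JacksonAux.sum_identity k hk
      rw [← hεdef] at hid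
      rw [hNdef]
      calc ∑ j ∈ Finset.range k, c j * c (j+1)
          = ∑ j ∈ Finset.range k, Real.sin (((j:ℝ)+1)*ε) * Real.sin (((j:ℝ)+2)*ε) := by
            apply Finset.sum_congr rfl
            intro j _
            rw [hcdef]
            push_cast
            ring_nf
        _ = Real.cos ε * ∑ j ∈ Finset.range (k+1), Real.sin (((j:ℝ)+1)*ε)^2 := hid
        _ = Real.cos ε * ∑ j ∈ Finset.range (k+1), (c j)^2 := by
            congr 1
    have hKcos : (∫ t in (-π)..π, Kf t * Real.cos t) = 2*π*(Real.cos ε * N) := by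
      simp only [hKf]
      rw [JacksonAux.Kcos k c, hsum]
    set Cc : ℕ → ℝ := fun s => ∫ u in (-π)..π, h u * Real.cos ((s:ℝ)*u) with hCcdef
    set Dd : ℕ → ℝ := fun s => ∫ u in (-π)..π, h u * Real.sin ((s:ℝ)*u) with hDddef
    set W : ℕ → ℝ := fun s => ∑ p ∈ (Finset.range (k+1) ×ˢ Finset.range (k+1)).filter
        (fun p => ((p.1:ℤ)-(p.2:ℤ)).natAbs = s), c p.1 * c p.2 with hWdef
    refine ⟨fun s => W s * Cc s / (2*π*N), fun s => W s * Dd s / (2*π*N), ?_⟩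
    intro x hx
    simp only []
    have hcsub : Continuous (fun t : ℝ => h (x - t)) :=
      hcont.comp (continuous_const.sub continuous_id)
    have hsplit0 : Finset.range (k+1) = insert 0 (Finset.Icc 1 k) := by
      ext a
      simp only [Finset.mem_range, Finset.mem_insert, Finset.mem_Icc]
      omega
    have hTx : W 0 * Cc 0 / (2*π*N) + ∑ s ∈ Finset.Icc 1 k,
          (W s * Cc s / (2*π*N) * Real.cos ((s:ℝ)*x) + W s * Dd s / (2*π*N) * Real.sin ((s:ℝ)*x))
        = (∫ t in (-π)..π, h (x-t) * Kf t) / (2*π*N) := by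
      have hT := JacksonAux.Tform hcont hper k c x
      simp only [hWdef, hCcdef, hDddef, hKf]
      rw [hT, hsplit0, Finset.sum_insert (by simp)]
      simp only [Nat.cast_zero, zero_mul, Real.cos_zero, Real.sin_zero, mul_one, mul_zero, add_zero]
      rw [add_div, Finset.sum_div]
      congr 1
      apply Finset.sum_congr rfl
      intro s _
      ring
    rw [hTx]
    have hi1 : IntervalIntegrable (fun t => h (x-t) * Kf t) MeasureTheory.volume (-π) π :=
      (hcsub.mul hKcont).intervalIntegrable _ _
    have herr : h x - (∫ t in (-π)..π, h (x-t) * Kf t) / (2*π*N)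
        = (∫ t in (-π)..π, (h x - h (x-t)) * Kf t) / (2*π*N) := by
      have hsub : (∫ t in (-π)..π, (h x - h (x-t)) * Kf t)
          = h x * (2*π*N) - ∫ t in (-π)..π, h (x-t) * Kf t := by
        have e : ∀ t ∈ Set.uIcc (-π) π, (h x - h (x-t)) * Kf t
            = h x * Kf t - h (x-t) * Kf t := fun t _ => by ring
        rw [intervalIntegral.integral_congr e,
          intervalIntegral.integral_sub (f := fun t => h x * Kf t) ((continuous_const.mul hKcont).intervalIntegrable _ _) hi1,
          intervalIntegral.integral_const_mul, hKint]
      rw [hsub]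
      field_simp
    rw [herr]
    -- now bound |∫ (h x - h (x-t)) * Kf t| 
    have key : |∫ t in (-π)..π, (h x - h (x-t)) * Kf t| * Real.sin ε
        ≤ (L:ℝ) * (ε * Real.sin ε) * (2*π*N) := by
      have e1 : |∫ t in (-π)..π, (h x - h (x-t)) * Kf t| * Real.sin ε
          = ‖∫ t in (-π)..π, ((h x - h (x-t)) * Kf t * Real.sin ε)‖ := by
        rw [intervalIntegral.integral_mul_const, Real.norm_eq_abs, abs_mul, abs_of_pos hsε]
      rw [e1]
      have hgc : Continuous (fun t : ℝ => (L:ℝ) * ((ε * Real.sin ε + Real.cos ε - Real.cos t) * Kf t)) := by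
        apply continuous_const.mul
        exact ((continuous_const.sub Real.continuous_cos).mul hKcont)
      have hg : IntervalIntegrable (fun t => (L:ℝ) * ((ε * Real.sin ε + Real.cos ε - Real.cos t) * Kf t))
          MeasureTheory.volume (-π) π := hgc.intervalIntegrable _ _
      have hae : ∀ᵐ t ∂(MeasureTheory.volume.restrict (Set.uIoc (-π) π)),
          ‖(h x - h (x-t)) * Kf t * Real.sin ε‖
            ≤ (L:ℝ) * ((ε * Real.sin ε + Real.cos ε - Real.cos t) * Kf t) := by
        filter_upwards [MeasureTheory.ae_restrict_mem measurableSet_uIoc] with t ht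
        rw [Set.uIoc_of_le (by linarith : -π ≤ π)] at ht
        have htabs : |t| ≤ π := abs_le.mpr ⟨ht.1.le, ht.2⟩
        have hmaj := JacksonAux.majorization_aux hε0 hε4 hG (abs_nonneg t) htabs
        rw [Real.cos_abs] at hmaj
        have hlip' : |h x - h (x - t)| ≤ (L:ℝ) * |t| := by
          have hdd := hlip.dist_le_mul x (x - t)
          rw [Real.dist_eq, Real.dist_eq] at hdd
          simpa [sub_sub_cancel] using hdd
        rw [Real.norm_eq_abs, abs_mul, abs_mul, abs_of_nonneg (hK0 t), abs_of_pos hsε]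
        calc |h x - h (x-t)| * Kf t * Real.sin ε
            = (|h x - h (x-t)| * Real.sin ε) * Kf t := by ring
          _ ≤ (((L:ℝ) * |t|) * Real.sin ε) * Kf t := by
              apply mul_le_mul_of_nonneg_right _ (hK0 t)
              exact mul_le_mul_of_nonneg_right hlip' hsε.le
          _ = ((L:ℝ) * (|t| * Real.sin ε)) * Kf t := by ring
          _ ≤ ((L:ℝ) * (ε * Real.sin ε + Real.cos ε - Real.cos t)) * Kf t := by
              apply mul_le_mul_of_nonneg_right _ (hK0 t)
              exact mul_le_mul_of_nonneg_left hmaj hL0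
          _ = (L:ℝ) * ((ε * Real.sin ε + Real.cos ε - Real.cos t) * Kf t) := by ring
      have h2 := intervalIntegral.norm_integral_le_of_norm_le (by linarith : -π ≤ π) (by
        have := (MeasureTheory.ae_restrict_iff' measurableSet_uIoc).mp hae
        rwa [Set.uIoc_of_le (by linarith : -π ≤ π)] at this) hg
      have hgval : (∫ t in (-π)..π, (L:ℝ) * ((ε * Real.sin ε + Real.cos ε - Real.cos t) * Kf t))
          = (L:ℝ) * (ε * Real.sin ε) * (2*π*N) := by
        rw [intervalIntegral.integral_const_mul]
        have e : ∀ t ∈ Set.uIcc (-π) π, (ε * Real.sin ε + Real.cos ε - Real.cos t) * Kf t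
            = (ε * Real.sin ε + Real.cos ε) * Kf t - Kf t * Real.cos t := fun t _ => by ring
        rw [intervalIntegral.integral_congr e,
          intervalIntegral.integral_sub (f := fun t => (ε * Real.sin ε + Real.cos ε) * Kf t) (g := fun t => Kf t * Real.cos t) ((continuous_const.mul hKcont).intervalIntegrable _ _)
            ((hKcont.mul Real.continuous_cos).intervalIntegrable _ _),
          intervalIntegral.integral_const_mul, hKint, hKcos]
        ring
      rw [hgval] at h2
      calc ‖∫ t in (-π)..π, ((h x - h (x-t)) * Kf t * Real.sin ε)‖
          ≤ |(L:ℝ) * (ε * Real.sin ε) * (2*π*N)| := h2.trans (le_abs_self _)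
        _ = (L:ℝ) * (ε * Real.sin ε) * (2*π*N) := abs_of_nonneg
            (mul_nonneg (mul_nonneg hL0 (mul_nonneg hε0.le hsε.le)) hS0.le)
    -- conclude
    have hstep : |(∫ t in (-π)..π, (h x - h (x-t)) * Kf t) / (2*π*N)| ≤ (L:ℝ) * ε := by
      rw [abs_div, abs_of_pos hS0, div_le_iff₀ hS0]
      nlinarith [key, hsε]
    have hεk : ε ≤ π / k := by
      rw [hεdef]
      apply div_le_div_of_nonneg_left hπ.le hk0R
      linarith
    calc |(∫ t in (-π)..π, (h x - h (x-t)) * Kf t) / (2*π*N)| ≤ (L:ℝ) * ε := hstep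
      _ ≤ (L:ℝ) * (π / k) := mul_le_mul_of_nonneg_left hεk hL0
      _ = (π / k) * L := by ring
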